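/- Let 2 ≤ m ≤ n and let x : Fin (m+n) → ℝ be nonzero with Σ_j x_j = 0, x_1 ≤ ⋯ ≤ x_m, x_{m+1} ≤ ⋯ ≤ x_{m+n}, and x_i ≤ x_j whenever 1 ≤ i ≤ m < j ≤ m+n. Set r = #{i : 1 ≤ i ≤ m−1, x_i < x_m} and t = #{j : m+1 ≤ j ≤ m+n, x_m < x_j}. Then (r,t) ≠ (0,0) and #{(i,j) : 1 ≤ i ≤ m < j ≤ m+n, x_i < x_j} = r·n + (m−r)·t. -/

import Mathlib

/-- Type AIII, G = SU(m,n) with 2 ≤ m ≤ n, case R⁺ = 0: with r, t as indicated,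
(r,t) ≠ (0,0) and #{(i,j) : i ≤ m < j ≤ m+n, x_i < x_j} = r·n + (m−r)·t. -/
theorem stmt2 (m n : ℕ) (hm : 2 ≤ m) (hmn : m ≤ n) (x : ℕ → ℝ)
    (hx : ∃ j ∈ Finset.Icc 1 (m+n), x j ≠ 0)
    (hsum : ∑ j ∈ Finset.Icc 1 (m+n), x j = 0)
    (hmono1 : ∀ i j, 1 ≤ i → i ≤ j → j ≤ m → x i ≤ x j)
    (hmono2 : ∀ i j, m+1 ≤ i → i ≤ j → j ≤ m+n → x i ≤ x j)
    (hle : ∀ i j, 1 ≤ i → i ≤ m → m < j → j ≤ m+n → x i ≤ x j) :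
    let r := ((Finset.Icc 1 (m-1)).filter (fun i => x i < x m)).card
    let t := ((Finset.Icc (m+1) (m+n)).filter (fun j => x m < x j)).card
    (r, t) ≠ (0, 0) ∧
    ((Finset.Icc 1 m ×ˢ Finset.Icc (m+1) (m+n)).filter
        (fun p => x p.1 < x p.2)).card = r * n + (m - r) * t := by
  intro r t
  have hxm : ∀ i, 1 ≤ i → i ≤ m → x i ≤ x m := fun i h1 h2 => hmono1 i m h1 h2 le_rfl
  have hmx : ∀ j, m + 1 ≤ j → j ≤ m + n → x m ≤ x j := fun j h1 h2 =>
    hle m j (by omega) le_rfl (by omega) h2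
  -- r as filter over Icc 1 m
  have hrA : ((Finset.Icc 1 m).filter (fun i => x i < x m)) =
      ((Finset.Icc 1 (m-1)).filter (fun i => x i < x m)) := by
    ext i
    simp only [Finset.mem_filter, Finset.mem_Icc]
    constructor
    · rintro ⟨⟨h1, h2⟩, h3⟩
      refine ⟨⟨h1, ?_⟩, h3⟩
      rcases Nat.lt_or_ge i m with h | h
      · omega
      · exfalso; exact absurd h3 (by simp [show i = m by omega])
    · rintro ⟨⟨h1, h2⟩, h3⟩; exact ⟨⟨h1, by omega⟩, h3⟩
  have hrcard : r ≤ m := by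
    have := Finset.card_filter_le (Finset.Icc 1 (m-1)) (fun i => x i < x m)
    simp [Nat.card_Icc] at this
    omega
  constructor
  · -- (r, t) ≠ (0, 0)
    intro h
    have hr0 : r = 0 := by simpa using congrArg Prod.fst h
    have ht0 : t = 0 := by simpa using congrArg Prod.snd h
    have hall : ∀ j ∈ Finset.Icc 1 (m+n), x j = x m := by
      intro j hj
      simp only [Finset.mem_Icc] at hj
      rcases Nat.lt_or_ge m j with h | h
      · -- j > m : use t = 0
        have hjB : j ∈ Finset.Icc (m+1) (m+n) := by simp [Finset.mem_Icc]; omega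
        have : ¬ x m < x j := by
          intro hlt
          have : j ∈ (Finset.Icc (m+1) (m+n)).filter (fun j => x m < x j) :=
            Finset.mem_filter.2 ⟨hjB, hlt⟩
          have := Finset.card_pos.2 ⟨j, this⟩
          omega
        have := hmx j (by omega) hj.2
        linarith
      · -- j ≤ m : use r = 0
        rcases Nat.eq_or_lt_of_le h with h' | h'
        · rw [h']
        · have hjA : j ∈ Finset.Icc 1 (m-1) := by simp [Finset.mem_Icc]; omega
          have : ¬ x j < x m := by
            intro hlt
            have : j ∈ (Finset.Icc 1 (m-1)).filter (fun i => x i < x m) :=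
              Finset.mem_filter.2 ⟨hjA, hlt⟩
            have := Finset.card_pos.2 ⟨j, this⟩
            omega
          have := hxm j hj.1 h
          linarith
    have hsum' : ∑ j ∈ Finset.Icc 1 (m+n), x j = (m+n : ℕ) * x m := by
      rw [Finset.sum_congr rfl hall]
      simp [Nat.card_Icc]
    have hxm0 : x m = 0 := by
      rw [hsum'] at hsum
      have : (m + n : ℕ) ≠ 0 := by omega
      have : ((m + n : ℕ) : ℝ) ≠ 0 := Nat.cast_ne_zero.2 this
      have hpos : (0:ℝ) < (m:ℝ) + n := by positivity
      rcases mul_eq_zero.1 (by push_cast at hsum ⊢; linarith [hsum] : ((m:ℝ) + n) * x m = 0) with h | h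
      · linarith
      · exact h
    obtain ⟨j, hj, hjne⟩ := hx
    exact hjne (by rw [hall j hj, hxm0])
  · -- the count
    have hset : ((Finset.Icc 1 m ×ˢ Finset.Icc (m+1) (m+n)).filter
        (fun p => x p.1 < x p.2)) =
        (((Finset.Icc 1 m).filter (fun i => x i < x m)) ×ˢ Finset.Icc (m+1) (m+n)) ∪
        (((Finset.Icc 1 m).filter (fun i => ¬ x i < x m)) ×ˢ
          ((Finset.Icc (m+1) (m+n)).filter (fun j => x m < x j))) := by
      ext ⟨i, j⟩
      simp only [Finset.mem_filter, Finset.mem_product, Finset.mem_union, Finset.mem_Icc]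
      constructor
      · rintro ⟨⟨hi, hj⟩, hij⟩
        by_cases him : x i < x m
        · exact Or.inl ⟨⟨hi, him⟩, hj⟩
        · refine Or.inr ⟨⟨hi, him⟩, hj, ?_⟩
          have : x m ≤ x i := le_of_not_gt him
          linarith
      · rintro (⟨⟨hi, him⟩, hj⟩ | ⟨⟨hi, him⟩, hj, hmj⟩)
        · have := hmx j hj.1 hj.2
          exact ⟨⟨hi, hj⟩, by linarith⟩
        · have := hxm i hi.1 hi.2
          exact ⟨⟨hi, hj⟩, by linarith⟩
    have hdisj : Disjoint
        (((Finset.Icc 1 m).filter (fun i => x i < x m)) ×ˢ Finset.Icc (m+1) (m+n))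
        (((Finset.Icc 1 m).filter (fun i => ¬ x i < x m)) ×ˢ
          ((Finset.Icc (m+1) (m+n)).filter (fun j => x m < x j))) := by
      rw [Finset.disjoint_left]
      rintro ⟨i, j⟩ h1 h2
      simp only [Finset.mem_product, Finset.mem_filter] at h1 h2
      exact h2.1.2 h1.1.2
    have hcompl : ((Finset.Icc 1 m).filter (fun i => ¬ x i < x m)).card = m - r := by
      have := Finset.card_filter_add_card_filter_not
        (s := Finset.Icc 1 m) (p := fun i => x i < x m)
      simp only [Nat.card_Icc] at this
      rw [hrA] at this
      omega
    rw [hset, Finset.card_union_of_disjoint hdisj, Finset.card_product, Finset.card_product,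
      hrA, hcompl]
    simp [Nat.card_Icc]
    rfl
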